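/- For every real x > 0, lim_{r→∞} r²·(h(⌊x·r²⌋)/h(1))·(⌊x·r²⌋/(r+1)³)·(1 − (r+1)^{−2})^{⌊x·r²⌋ − 1} = (2/√π)·√x·e^{−x}, where the limit is over integers r → ∞. -/

import Mathlib

/-- h(k) = 4^{−k}·binom(2k,k), with binom the central binomial coefficient. -/
noncomputable def hfun (k : ℕ) : ℝ := (Nat.choose (2 * k) k : ℝ) / 4 ^ k

open Filter Real Topology Stirling

lemma stirlingSeq_sq (n : ℕ) :
    stirlingSeq n ^ 2 = (n.factorial : ℝ)^2 / ((2*(n:ℝ)) * (((n:ℝ) / Real.exp 1) ^ n)^2) := by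
  rw [stirlingSeq, div_pow, mul_pow, Real.sq_sqrt (by positivity)]

lemma stirlingSeq_pos' (n : ℕ) (hn : 1 ≤ n) : 0 < stirlingSeq n := by
  have h0 : (0:ℝ) < n := by exact_mod_cast hn
  have h1 : (0:ℝ) < (n.factorial : ℝ) := by exact_mod_cast n.factorial_pos
  rw [stirlingSeq]
  positivity

lemma hfun_sqrt_eq (n : ℕ) (hn : 1 ≤ n) :
    Real.sqrt n * hfun n = stirlingSeq (2*n) / stirlingSeq n ^ 2 := by
  have h0 : (0:ℝ) < n := by exact_mod_cast hn
  have hfacn : (2*n).factorial = Nat.choose (2*n) n * n.factorial * n.factorial := by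
    have := Nat.choose_mul_factorial_mul_factorial (Nat.le_mul_of_pos_left n (by norm_num : 0 < 2))
    rw [show 2*n - n = n by omega] at this
    omega
  have hfac : ((2*n).factorial : ℝ) = (Nat.choose (2*n) n : ℝ) * (n.factorial : ℝ) * (n.factorial : ℝ) := by
    exact_mod_cast congrArg (Nat.cast : ℕ → ℝ) hfacn
  have hL : 0 ≤ Real.sqrt n * hfun n := by
    have : (0:ℝ) ≤ hfun n := by unfold hfun; positivity
    positivity
  have hR : 0 ≤ stirlingSeq (2*n) / stirlingSeq n ^ 2 :=
    le_of_lt (div_pos (stirlingSeq_pos' _ (by omega)) (pow_pos (stirlingSeq_pos' _ hn) 2))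
  have e1 : ((2*(n:ℝ))/Real.exp 1)^(2*n) = 4^n * (((n:ℝ)/Real.exp 1)^n)^2 := by
    rw [show (2*(n:ℝ))/Real.exp 1 = 2*((n:ℝ)/Real.exp 1) by ring, mul_pow, ← pow_mul,
      show (2:ℝ)^(2*n) = 4^n by rw [pow_mul]; norm_num, mul_comm n 2]
  have hsq : (Real.sqrt n * hfun n)^2 = (stirlingSeq (2*n) / stirlingSeq n ^ 2)^2 := by
    rw [mul_pow, Real.sq_sqrt h0.le, div_pow, stirlingSeq_sq, stirlingSeq_sq]
    rw [hfun]
    push_cast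
    rw [hfac, e1]
    have hne1 : ((n:ℝ)/Real.exp 1)^n ≠ 0 := by positivity
    have hne2 : (n.factorial : ℝ) ≠ 0 := by positivity
    field_simp
  calc Real.sqrt n * hfun n = Real.sqrt ((Real.sqrt n * hfun n)^2) := (Real.sqrt_sq hL).symm
    _ = Real.sqrt ((stirlingSeq (2*n) / stirlingSeq n ^ 2)^2) := by rw [hsq]
    _ = _ := Real.sqrt_sq hR

lemma hfun_asymp : Tendsto (fun n : ℕ => Real.sqrt n * hfun n) atTop (𝓝 (1 / Real.sqrt π)) := by
  have h2 : Tendsto (fun n : ℕ => 2*n) atTop atTop :=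
    tendsto_atTop_mono (fun n => by simp; omega) tendsto_id
  have hs2 : Tendsto (fun n : ℕ => stirlingSeq (2*n)) atTop (𝓝 (Real.sqrt π)) :=
    tendsto_stirlingSeq_sqrt_pi.comp h2
  have hpi : Real.sqrt π ≠ 0 := ne_of_gt (Real.sqrt_pos.mpr Real.pi_pos)
  have hdiv : Tendsto (fun n : ℕ => stirlingSeq (2*n) / stirlingSeq n ^ 2) atTop
      (𝓝 (Real.sqrt π / (Real.sqrt π)^2)) :=
    hs2.div (tendsto_stirlingSeq_sqrt_pi.pow 2) (by positivity)
  have : Real.sqrt π / (Real.sqrt π)^2 = 1 / Real.sqrt π := by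
    rw [sq]; field_simp
  rw [this] at hdiv
  apply hdiv.congr'
  filter_upwards [eventually_ge_atTop 1] with n hn
  exact (hfun_sqrt_eq n hn).symm

lemma alg_aux (H s K E R : ℝ) (hs : s * s = K) (hR : 0 < R) :
    s * H * (2 * (s / R * (R / (R + 1)) ^ 3)) * E
      = R ^ 2 * (H / (1 / 2)) * (K / (R + 1) ^ 3) * E := by
  subst hs
  have hR0 : R ≠ 0 := ne_of_gt hR
  have hR1 : R + 1 ≠ 0 := by positivity
  field_simp

/-- For every x > 0,
r²·(h(⌊x·r²⌋)/h(1))·(⌊x·r²⌋/(r+1)³)·(1 − (r+1)^{−2})^{⌊x·r²⌋−1}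
→ (2/√π)·√x·e^{−x} as the integer r → ∞. -/
theorem perimeter_local_limit (x : ℝ) (hx : 0 < x) :
    Filter.Tendsto
      (fun r : ℕ =>
        (r : ℝ) ^ 2 * (hfun ⌊x * (r : ℝ) ^ 2⌋₊ / hfun 1) *
          ((⌊x * (r : ℝ) ^ 2⌋₊ : ℝ) / ((r : ℝ) + 1) ^ 3) *
          (1 - ((r : ℝ) + 1) ^ (-2 : ℤ)) ^ (⌊x * (r : ℝ) ^ 2⌋₊ - 1))
      Filter.atTop (nhds (2 / Real.sqrt Real.pi * Real.sqrt x * Real.exp (-x))) := by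
  set k : ℕ → ℕ := fun r => ⌊x * (r : ℝ) ^ 2⌋₊ with hkdef
  have hr2top : Tendsto (fun r : ℕ => (r:ℝ)^2) atTop atTop :=
    (tendsto_pow_atTop (two_ne_zero)).comp tendsto_natCast_atTop_atTop
  have hxr : Tendsto (fun r : ℕ => x * (r:ℝ)^2) atTop atTop := hr2top.const_mul_atTop hx
  have hktop : Tendsto k atTop atTop := tendsto_nat_floor_atTop.comp hxr
  have hk1 : ∀ᶠ r in atTop, 1 ≤ k r := hktop.eventually_ge_atTop 1
  have hr1 : ∀ᶠ r : ℕ in atTop, 1 ≤ r := eventually_ge_atTop 1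
  -- k r / r² → x
  have hinvr2 : Tendsto (fun r : ℕ => ((r:ℝ)^2)⁻¹) atTop (𝓝 0) :=
    tendsto_inv_atTop_zero.comp hr2top
  have hkdiv : Tendsto (fun r : ℕ => (k r : ℝ) / (r:ℝ)^2) atTop (𝓝 x) := by
    have hlow : Tendsto (fun r : ℕ => x - ((r:ℝ)^2)⁻¹) atTop (𝓝 x) := by
      simpa using tendsto_const_nhds.sub hinvr2
    apply tendsto_of_tendsto_of_tendsto_of_le_of_le' hlow tendsto_const_nhds
    · filter_upwards [hr1] with r hr
      have hr0 : (0:ℝ) < (r:ℝ)^2 := by positivity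
      have h1 : x * (r:ℝ)^2 - 1 < (k r : ℝ) := Nat.sub_one_lt_floor _
      calc x - ((r:ℝ)^2)⁻¹ = (x * (r:ℝ)^2 - 1) / (r:ℝ)^2 := by field_simp
        _ ≤ (k r : ℝ) / (r:ℝ)^2 := (div_le_div_iff_of_pos_right hr0).mpr h1.le
    · filter_upwards [hr1] with r hr
      have hr0 : (0:ℝ) < (r:ℝ)^2 := by positivity
      rw [div_le_iff₀ hr0]
      exact Nat.floor_le (by positivity)
  -- auxiliary limits
  have hsqx : Tendsto (fun r : ℕ => Real.sqrt ((k r : ℝ)/(r:ℝ)^2)) atTop (𝓝 (Real.sqrt x)) :=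
    (Real.continuous_sqrt.continuousAt.tendsto).comp hkdiv
  have hrat : Tendsto (fun r : ℕ => (r:ℝ)/((r:ℝ)+1)) atTop (𝓝 1) :=
    tendsto_natCast_div_add_atTop (1:ℝ)
  have hrat3 : Tendsto (fun r : ℕ => ((r:ℝ)/((r:ℝ)+1))^3) atTop (𝓝 1) := by
    simpa using hrat.pow 3
  have hr1top : Tendsto (fun r : ℕ => ((r:ℝ)+1)^2) atTop atTop :=
    (tendsto_pow_atTop two_ne_zero).comp (tendsto_atTop_add_const_right _ 1 tendsto_natCast_atTop_atTop)
  have hinv2 : Tendsto (fun r : ℕ => (((r:ℝ)+1)^2)⁻¹) atTop (𝓝 0) :=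
    tendsto_inv_atTop_zero.comp hr1top
  -- (k r - 1)/(r+1)² → x
  have hkm1 : Tendsto (fun r : ℕ => ((k r : ℝ) - 1)/((r:ℝ)+1)^2) atTop (𝓝 x) := by
    have h := (hkdiv.mul (hrat.pow 2)).sub hinv2
    rw [show x * 1^2 - 0 = x by ring] at h
    apply h.congr'
    filter_upwards [hr1] with r hr
    have hr0 : (r:ℝ) ≠ 0 := by positivity
    have hr10 : (r:ℝ) + 1 ≠ 0 := by positivity
    field_simp
  -- log(1-t)/t → -1
  have hlog : Tendsto (fun t : ℝ => Real.log (1 - t) / t) (𝓝[≠] 0) (𝓝 (-1)) := by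
    have hd : HasDerivAt (fun t : ℝ => Real.log (1 - t)) (-1) 0 := by
      have h1 : HasDerivAt (fun t : ℝ => 1 - t) (-1) 0 := by
        simpa using (hasDerivAt_id (0:ℝ)).const_sub 1
      have := h1.log (by norm_num)
      simpa using this
    have h := hasDerivAt_iff_tendsto_slope.mp hd
    exact h.congr fun t => by simp [slope_fun_def, Real.log_one, div_eq_inv_mul]
  have htr : Tendsto (fun r : ℕ => (((r:ℝ)+1)^2)⁻¹) atTop (𝓝[≠] 0) := by
    apply tendsto_nhdsWithin_of_tendsto_nhds_of_eventually_within _ hinv2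
    filter_upwards with r
    have : (0:ℝ) < (((r:ℝ)+1)^2)⁻¹ := by positivity
    simp [ne_of_gt this]
  have hlogr : Tendsto (fun r : ℕ =>
      Real.log (1 - (((r:ℝ)+1)^2)⁻¹) / (((r:ℝ)+1)^2)⁻¹) atTop (𝓝 (-1)) := hlog.comp htr
  have hexp : Tendsto (fun r : ℕ =>
      ((k r : ℝ) - 1) * Real.log (1 - (((r:ℝ)+1)^2)⁻¹)) atTop (𝓝 (-x)) := by
    have h := hkm1.mul hlogr
    rw [show x * (-1) = -x by ring] at h
    apply h.congr
    intro r
    have h0 : ((r:ℝ)+1)^2 ≠ 0 := by positivity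
    field_simp
  have hexp' : Tendsto (fun r : ℕ =>
      Real.exp (((k r : ℝ) - 1) * Real.log (1 - (((r:ℝ)+1)^2)⁻¹))) atTop (𝓝 (Real.exp (-x))) :=
    (Real.continuous_exp.continuousAt.tendsto).comp hexp
  -- assemble
  have hmain : Tendsto (fun r : ℕ =>
      (Real.sqrt (k r) * hfun (k r)) *
        (2 * (Real.sqrt ((k r : ℝ)/(r:ℝ)^2) * ((r:ℝ)/((r:ℝ)+1))^3)) *
        Real.exp (((k r : ℝ) - 1) * Real.log (1 - (((r:ℝ)+1)^2)⁻¹))) atTop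
      (𝓝 (1 / Real.sqrt π * (2 * (Real.sqrt x * 1)) * Real.exp (-x))) :=
    ((hfun_asymp.comp hktop).mul (tendsto_const_nhds.mul (hsqx.mul hrat3))).mul hexp'
  rw [show 1 / Real.sqrt π * (2 * (Real.sqrt x * 1)) * Real.exp (-x)
      = 2 / Real.sqrt π * Real.sqrt x * Real.exp (-x) by ring] at hmain
  apply hmain.congr'
  filter_upwards [hr1, hk1] with r hr hk
  have hr0 : (0:ℝ) < r := by exact_mod_cast hr
  have hk0 : (0:ℝ) ≤ (k r : ℝ) := by positivity
  have ht0 : (0:ℝ) < (((r:ℝ)+1)^2)⁻¹ := by positivity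
  have ht1 : (((r:ℝ)+1)^2)⁻¹ < 1 := by
    rw [inv_lt_one_iff₀]
    right
    nlinarith [hr0]
  have h1t : (0:ℝ) < 1 - (((r:ℝ)+1)^2)⁻¹ := by linarith
  -- rewrite zpow
  have hz : ((r:ℝ)+1) ^ (-2 : ℤ) = (((r:ℝ)+1)^2)⁻¹ := by
    rw [zpow_neg, show ((2:ℤ)) = ((2:ℕ):ℤ) from rfl, zpow_natCast]
  -- rewrite pow as exp
  have hpow : (1 - (((r:ℝ)+1)^2)⁻¹) ^ (k r - 1)
      = Real.exp (((k r : ℝ) - 1) * Real.log (1 - (((r:ℝ)+1)^2)⁻¹)) := by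
    have hc : ((k r - 1 : ℕ) : ℝ) = (k r : ℝ) - 1 := by
      push_cast [hk]; ring
    rw [← hc, ← Real.log_pow, Real.exp_log (pow_pos h1t _)]
  have hs : Real.sqrt (k r) * Real.sqrt (k r) = (k r : ℝ) := Real.mul_self_sqrt hk0
  have hsd : Real.sqrt ((k r : ℝ)/(r:ℝ)^2) = Real.sqrt (k r) / (r:ℝ) := by
    rw [Real.sqrt_div hk0, Real.sqrt_sq hr0.le]
  have hfun1 : hfun 1 = 1/2 := by
    norm_num [hfun]
  rw [hz, hpow, hfun1, hsd]
  exact alg_aux (hfun (k r)) _ _ _ _ hs hr0
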